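/- Let u be the lexicographically least infinite square-free word over {0,1,2} (with 0 < 1 < 2). Then for every infinite binary conducting sequence β containing infinitely many 0's and 1's, the shuffle u ⧢_β u is not square-free. -/

import Mathlib

def infShuffle {α : Type*} (u v : ℕ → α) (β : ℕ → Bool) (n : ℕ) : α :=
  let j := ((Finset.range n).filter (fun k => β k = β n)).card
  if β n then v j else u j

def SqFreeInf {α : Type*} (w : ℕ → α) : Prop :=
  ∀ i l : ℕ, 0 < l → ¬ (∀ k < l, w (i + k) = w (i + l + k))

namespace S19

/-- prefix-pointwise order -/
def Le (x y : ℕ → Fin 3) : Prop := ∀ n, (∀ k < n, x k = y k) → x n ≤ y n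

theorem sqf_shift {w : ℕ → Fin 3} (h : SqFreeInf w) (d : ℕ) :
    SqFreeInf (fun n => w (d + n)) := by
  intro i l hl hcon
  refine h (d + i) l hl (fun k hk => ?_)
  have := hcon k hk
  simp only at this
  have e1 : d + (i + k) = d + i + k := by omega
  have e2 : d + (i + l + k) = d + i + l + k := by omega
  rw [e1, e2] at this
  exact this

section U

variable {u : ℕ → Fin 3}

theorem ex_ne (hu : SqFreeInf u) (p : ℕ) (hp : 0 < p) : ∃ k, u k ≠ u (p + k) := by
  by_contra h
  push_neg at h
  refine hu 0 p hp (fun k hk => ?_)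
  have := h k
  simpa [Nat.add_comm] using this

noncomputable def fd (hu : SqFreeInf u) (p : ℕ) : ℕ :=
  if h : 0 < p then Nat.find (ex_ne hu p h) else 0

theorem fd_ne (hu : SqFreeInf u) {p : ℕ} (hp : 0 < p) :
    u (fd hu p) ≠ u (p + fd hu p) := by
  rw [fd, dif_pos hp]
  exact Nat.find_spec (ex_ne hu p hp)

theorem fd_agree (hu : SqFreeInf u) {p : ℕ} (hp : 0 < p) {k : ℕ} (hk : k < fd hu p) :
    u k = u (p + k) := by
  rw [fd, dif_pos hp] at hk
  have := Nat.find_min (ex_ne hu p hp) hk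
  simpa using this

theorem fd_le (hu : SqFreeInf u) {p : ℕ} (hp : 0 < p) {k : ℕ} (h : u k ≠ u (p + k)) :
    fd hu p ≤ k := by
  rw [fd, dif_pos hp]
  exact Nat.find_le h

theorem fd_lt_self (hu : SqFreeInf u) {p : ℕ} (hp : 0 < p) : fd hu p < p := by
  by_contra h
  push_neg at h
  refine hu 0 p hp (fun k hk => ?_)
  have := fd_agree hu hp (lt_of_lt_of_le hk h)
  simpa [Nat.add_comm] using this

theorem fd_up (hL : ∀ v : ℕ → Fin 3, SqFreeInf v → Le u v) (hu : SqFreeInf u) {p : ℕ} (hp : 0 < p) :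
    u (fd hu p) < u (p + fd hu p) := by
  have h1 : u (fd hu p) ≤ u (p + fd hu p) := by
    have hv := hL (fun n => u (p + n)) (sqf_shift hu p)
    exact hv (fd hu p) (fun k hk => fd_agree hu hp hk)
  exact lt_of_le_of_ne h1 (fd_ne hu hp)

theorem fd_add_le (hL : ∀ v : ℕ → Fin 3, SqFreeInf v → Le u v) (hu : SqFreeInf u) {a b : ℕ} (ha : 0 < a) (hb : 0 < b)
    (hv : b ≤ fd hu a) :
    fd hu (a + b) ≤ min (fd hu b) (fd hu a - b) := by
  set m := min (fd hu b) (fd hu a - b) with hm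
  have hstrict : u m < u (a + b + m) := by
    rcases lt_trichotomy (fd hu b) (fd hu a - b) with hc | hc | hc
    · -- m = fd b
      have hme : m = fd hu b := by omega
      have h1 : u m < u (b + m) := by rw [hme]; exact fd_up hL hu hb
      have h2 : u (b + m) = u (a + (b + m)) := by
        refine fd_agree hu ha ?_
        omega
      have e : a + (b + m) = a + b + m := by omega
      rw [e] at h2
      exact h2 ▸ h1
    · -- equal
      have hme : m = fd hu b := by omega
      have hbf : b + m = fd hu a := by omega
      have h1 : u m < u (b + m) := by rw [hme]; exact fd_up hL hu hb
      have h2 : u (b + m) < u (a + (b + m)) := by rw [hbf]; exact fd_up hL hu ha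
      have e : a + (b + m) = a + b + m := by omega
      rw [e] at h2
      exact lt_trans h1 h2
    · -- m = fd a - b
      have hme : m = fd hu a - b := by omega
      have hbf : b + m = fd hu a := by omega
      have h1 : u m = u (b + m) := by
        refine fd_agree hu hb ?_
        omega
      have h2 : u (b + m) < u (a + (b + m)) := by rw [hbf]; exact fd_up hL hu ha
      have e : a + (b + m) = a + b + m := by omega
      rw [e] at h2
      exact h1 ▸ h2
  exact fd_le hu (by omega) hstrict.ne

theorem fd_extract (hL : ∀ v : ℕ → Fin 3, SqFreeInf v → Le u v) (hu : SqFreeInf u) {a b : ℕ} (ha : 0 < a) (hb : 0 < b)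
    (hv : b ≤ fd hu a) :
    b + fd hu (a + b) ≤ fd hu a := by
  have := fd_add_le hL hu ha hb hv
  omega

theorem fd_add_le_left (hL : ∀ v : ℕ → Fin 3, SqFreeInf v → Le u v) (hu : SqFreeInf u) {a b : ℕ} (ha : 0 < a) (hb : 0 < b)
    (hv : b ≤ fd hu a) :
    fd hu (a + b) ≤ fd hu b := by
  have := fd_add_le hL hu ha hb hv
  omega

end U


section Runs

variable {β : ℕ → Bool}

noncomputable def nxt (hsw : ∀ n : ℕ, ∃ m, n < m ∧ β m ≠ β n) (n : ℕ) : ℕ :=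
  Nat.find (hsw n)

theorem lt_nxt (hsw : ∀ n : ℕ, ∃ m, n < m ∧ β m ≠ β n) (n : ℕ) : n < nxt hsw n :=
  (Nat.find_spec (hsw n)).1

theorem nxt_ne (hsw : ∀ n : ℕ, ∃ m, n < m ∧ β m ≠ β n) (n : ℕ) :
    β (nxt hsw n) ≠ β n :=
  (Nat.find_spec (hsw n)).2

theorem nxt_min (hsw : ∀ n : ℕ, ∃ m, n < m ∧ β m ≠ β n) {n m : ℕ}
    (h1 : n < m) (h2 : m < nxt hsw n) : β m = β n := by
  have := Nat.find_min (hsw n) h2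
  push_neg at this
  exact this h1

noncomputable def ss (hsw : ∀ n : ℕ, ∃ m, n < m ∧ β m ≠ β n) : ℕ → ℕ
  | 0 => 0
  | i + 1 => nxt hsw (ss hsw i)

variable (hsw : ∀ n : ℕ, ∃ m, n < m ∧ β m ≠ β n)

noncomputable def ll (i : ℕ) : ℕ := ss hsw (i + 1) - ss hsw i

theorem ss_lt (i : ℕ) : ss hsw i < ss hsw (i + 1) := lt_nxt hsw (ss hsw i)

theorem ll_pos (i : ℕ) : 0 < ll hsw i := by
  have := ss_lt hsw i
  unfold ll
  omega

theorem ss_add (i : ℕ) : ss hsw (i + 1) = ss hsw i + ll hsw i := by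
  have := ss_lt hsw i
  unfold ll
  omega

theorem ss_mono : StrictMono (ss hsw) :=
  strictMono_nat_of_lt_succ (ss_lt hsw)

theorem run_const {i m : ℕ} (h1 : ss hsw i ≤ m) (h2 : m < ss hsw (i + 1)) :
    β m = β (ss hsw i) := by
  rcases eq_or_lt_of_le h1 with h | h
  · rw [h]
  · exact nxt_min hsw h h2

theorem run_alt (i : ℕ) : β (ss hsw (i + 1)) ≠ β (ss hsw i) :=
  nxt_ne hsw (ss hsw i)

def cnt (b : Bool) (n : ℕ) : ℕ := ((Finset.range n).filter (fun k => β k = b)).card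

theorem cnt_succ (b : Bool) (n : ℕ) :
    cnt (β := β) b (n + 1) = cnt (β := β) b n + if β n = b then 1 else 0 := by
  unfold cnt
  rw [Finset.range_add_one, Finset.filter_insert]
  split
  · rw [Finset.card_insert_of_notMem (by simp)]
  · simp

theorem cnt_run_same : ∀ d : ℕ, ss hsw i + d ≤ ss hsw (i + 1) →
    cnt (β := β) (β (ss hsw i)) (ss hsw i + d) = cnt (β := β) (β (ss hsw i)) (ss hsw i) + d := by
  intro d
  induction d with
  | zero => intro _; simp
  | succ d ih =>
    intro hd
    have h1 : ss hsw i + d ≤ ss hsw (i + 1) := by omega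
    have e : ss hsw i + (d + 1) = (ss hsw i + d) + 1 := by omega
    rw [e, cnt_succ, ih h1, if_pos (run_const hsw (by omega) (by omega))]
    omega

theorem cnt_run_other {b : Bool} (hb : b ≠ β (ss hsw i)) :
    ∀ d : ℕ, ss hsw i + d ≤ ss hsw (i + 1) →
    cnt (β := β) b (ss hsw i + d) = cnt (β := β) b (ss hsw i) := by
  intro d
  induction d with
  | zero => intro _; simp
  | succ d ih =>
    intro hd
    have h1 : ss hsw i + d ≤ ss hsw (i + 1) := by omega
    have e : ss hsw i + (d + 1) = (ss hsw i + d) + 1 := by omega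
    rw [e, cnt_succ, ih h1, if_neg (by
      rw [run_const hsw (i := i) (by omega) (by omega)]
      exact fun h => hb h.symm)]
    simp

noncomputable def cc (i : ℕ) : ℕ := cnt (β := β) (β (ss hsw i)) (ss hsw i)

theorem cc_zero : cc (β := β) hsw 0 = 0 := by
  unfold cc cnt
  simp [ss]
  rfl

theorem cc_one : cc (β := β) hsw 1 = 0 := by
  unfold cc
  have h1 : ss hsw 1 = ss hsw 0 + ll hsw 0 := ss_add hsw 0
  have h2 := cnt_run_other hsw (i := 0) (b := β (ss hsw 1)) (run_alt hsw 0) (ll hsw 0)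
    (by have := ss_add hsw 0; omega)
  rw [← h1] at h2
  rw [h2]
  unfold cnt
  simp [ss]
  rfl

theorem cc_step (i : ℕ) : cc (β := β) hsw (i + 2) = cc (β := β) hsw i + ll hsw i := by
  have hb2 : β (ss hsw (i + 2)) = β (ss hsw i) := by
    have h1 := run_alt hsw (i + 1)
    have h2 := run_alt hsw i
    rcases Bool.eq_false_or_eq_true (β (ss hsw i)) with h | h <;>
      rcases Bool.eq_false_or_eq_true (β (ss hsw (i+1))) with h' | h' <;>
      rcases Bool.eq_false_or_eq_true (β (ss hsw (i+2))) with h'' | h'' <;>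
      simp_all
  unfold cc
  rw [hb2]
  have e2 : ss hsw (i + 2) = ss hsw (i + 1) + ll hsw (i + 1) := ss_add hsw (i + 1)
  have h3 : cnt (β := β) (β (ss hsw i)) (ss hsw (i + 1) + ll hsw (i + 1))
      = cnt (β := β) (β (ss hsw i)) (ss hsw (i + 1)) :=
    cnt_run_other hsw (i := i + 1) (Ne.symm (run_alt hsw i)) (ll hsw (i + 1))
      (by have := ss_add hsw (i + 1); omega)
  have e1 : ss hsw (i + 1) = ss hsw i + ll hsw i := ss_add hsw i
  have h4 : cnt (β := β) (β (ss hsw i)) (ss hsw i + ll hsw i)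
      = cnt (β := β) (β (ss hsw i)) (ss hsw i) + ll hsw i :=
    cnt_run_same hsw (ll hsw i) (by have := ss_add hsw i; omega)
  rw [e2, h3, e1, h4]

theorem run_letter {u : ℕ → Fin 3} {i m : ℕ} (hm : m < ll hsw i) :
    infShuffle u u β (ss hsw i + m) = u (cc (β := β) hsw i + m) := by
  have hβ : β (ss hsw i + m) = β (ss hsw i) := by
    refine run_const hsw (by omega) ?_
    have := ss_add hsw i
    omega
  have hc : cnt (β := β) (β (ss hsw i + m)) (ss hsw i + m)
      = cc (β := β) hsw i + m := by
    rw [hβ]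
    have := ss_add hsw i
    exact cnt_run_same hsw m (by omega)
  unfold infShuffle
  simp only
  rw [ite_self]
  rw [show ((Finset.range (ss hsw i + m)).filter
      (fun k => β k = β (ss hsw i + m))).card
      = cnt (β := β) (β (ss hsw i + m)) (ss hsw i + m) from rfl, hc]

end Runs

end S19

theorem stmt19 (u : ℕ → Fin 3) (hu : SqFreeInf u)
    (hmin : ∀ v : ℕ → Fin 3, SqFreeInf v →
      u = v ∨ ∃ n : ℕ, (∀ k < n, u k = v k) ∧ u n < v n)
    (β : ℕ → Bool)
    (hb0 : ∀ n : ℕ, ∃ m, n ≤ m ∧ β m = false)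
    (hb1 : ∀ n : ℕ, ∃ m, n ≤ m ∧ β m = true) :
    ¬ SqFreeInf (infShuffle u u β) := by
  intro hsq
  set w := infShuffle u u β with hw
  -- minimality in pointwise-prefix form
  have hL : ∀ v : ℕ → Fin 3, SqFreeInf v → S19.Le u v := by
    intro v hv
    rcases hmin v hv with h | ⟨N, hag, hlt⟩
    · intro n _
      exact le_of_eq (congrFun h n)
    · intro n hn
      rcases lt_trichotomy n N with h | h | h
      · exact le_of_eq (hag n h)
      · exact h ▸ hlt.le
      · exact absurd (hn N h) (fun he => absurd he (ne_of_lt hlt))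
  -- infinitely many switches
  have hsw : ∀ n : ℕ, ∃ m, n < m ∧ β m ≠ β n := by
    intro n
    cases hβ : β n with
    | false =>
      obtain ⟨m, hm, hv⟩ := hb1 (n + 1)
      exact ⟨m, by omega, by simp [hv, hβ]⟩
    | true =>
      obtain ⟨m, hm, hv⟩ := hb0 (n + 1)
      exact ⟨m, by omega, by simp [hv, hβ]⟩
  -- STq : anchored Lyndon depths from kill facts
  have stq : ∀ I : ℕ,
      (∀ m j : ℕ, j < m → m ≤ I →
        S19.ll hsw m ≤ S19.fd hu (S19.ss hsw m - S19.ss hsw j)) →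
      ∀ k j : ℕ, j < k → k ≤ I →
        S19.ss hsw (I + 1) - S19.ss hsw k ≤ S19.fd hu (S19.ss hsw k - S19.ss hsw j) := by
    intro I HK
    have mainstq : ∀ d k j : ℕ, j < k → k ≤ I → I - k = d →
        S19.ss hsw (I + 1) - S19.ss hsw k ≤ S19.fd hu (S19.ss hsw k - S19.ss hsw j) := by
      intro d
      induction d with
      | zero =>
        intro k j hjk hkI hd
        have hk : k = I := by omega
        subst hk
        have h1 := HK k j hjk le_rfl
        have e := S19.ss_add hsw k
        unfold S19.ll at h1
        omega
      | succ d ih =>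
        intro k j hjk hkI hd
        have ih' := ih (k + 1) j (by omega) (by omega) (by omega)
        have hmono := S19.ss_mono hsw hjk
        have ha : 0 < S19.ss hsw k - S19.ss hsw j := by omega
        have hb := S19.ll_pos hsw k
        have hv := HK k j hjk (by omega)
        have hext := S19.fd_extract hL hu ha hb hv
        have e2 := S19.ss_add hsw k
        have e1 : (S19.ss hsw k - S19.ss hsw j) + S19.ll hsw k
            = S19.ss hsw (k + 1) - S19.ss hsw j := by omega
        rw [e1] at hext
        omega
    exact fun k j h1 h2 => mainstq (I - k) k j h1 h2 rfl
  -- PRE : blocks are prefixes of u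
  have pre : ∀ i D : ℕ,
      (∀ m j : ℕ, j < m → m < i →
        S19.ll hsw m ≤ S19.fd hu (S19.ss hsw m - S19.ss hsw j)) →
      (2 ≤ i → D ≤ S19.ll hsw (i - 1)) →
      ∀ j' < D, u (S19.cc hsw i + j') = u j' := by
    intro i
    induction i using Nat.strong_induction_on with
    | _ i IH =>
      intro D HK hD j' hj'
      rcases i with _ | (_ | i2)
      · rw [S19.cc_zero hsw, Nat.zero_add]
      · rw [S19.cc_one hsw, Nat.zero_add]
      · show u (S19.cc hsw (i2 + 2) + j') = u j'
        have hD' : D ≤ S19.ll hsw (i2 + 1) := by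
          have h := hD (by omega)
          have e : i2 + 1 + 1 - 1 = i2 + 1 := by omega
          rw [e] at h
          exact h
        have hK' : ∀ m j : ℕ, j < m → m ≤ i2 + 1 →
            S19.ll hsw m ≤ S19.fd hu (S19.ss hsw m - S19.ss hsw j) :=
          fun m j h1 h2 => HK m j h1 (by omega)
        have h1 := stq (i2 + 1) hK' (i2 + 1) i2 (by omega) le_rfl
        have ea1 := S19.ss_add hsw i2
        have ea2 := S19.ss_add hsw (i2 + 1)
        have e1 : S19.ss hsw (i2 + 1) - S19.ss hsw i2 = S19.ll hsw i2 := by omega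
        have e2 : S19.ss hsw (i2 + 1 + 1) - S19.ss hsw (i2 + 1) = S19.ll hsw (i2 + 1) := by
          omega
        rw [e1, e2] at h1
        have hd2 : 2 ≤ i2 → S19.ll hsw i2 + D ≤ S19.ll hsw (i2 - 1) := by
          intro h2
          have h3 := stq (i2 + 1) hK' i2 (i2 - 1) (by omega) (by omega)
          have e0 : i2 - 1 + 1 = i2 := by omega
          have ea3 := S19.ss_add hsw (i2 - 1)
          rw [e0] at ea3
          have e3 : S19.ss hsw i2 - S19.ss hsw (i2 - 1) = S19.ll hsw (i2 - 1) := by omega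
          rw [e3] at h3
          have h4 := S19.fd_lt_self hu (S19.ll_pos hsw (i2 - 1))
          omega
        have hinner := IH i2 (by omega) (S19.ll hsw i2 + D)
          (fun m j h1' h2' => HK m j h1' (by omega)) hd2
        have hcc := S19.cc_step hsw i2
        have hstep1 : u (S19.cc hsw (i2 + 2) + j') = u (S19.ll hsw i2 + j') := by
          have h5 := hinner (S19.ll hsw i2 + j') (by omega)
          rw [hcc, show S19.cc hsw i2 + S19.ll hsw i2 + j'
            = S19.cc hsw i2 + (S19.ll hsw i2 + j') by omega]
          exact h5
        have hstep2 : u (S19.ll hsw i2 + j') = u j' :=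
          (S19.fd_agree hu (S19.ll_pos hsw i2) (k := j') (by omega)).symm
        rw [hstep1, hstep2]
  -- MAIN simultaneous induction
  have main : ∀ i : ℕ,
      (∀ j : ℕ, j ≤ i → ∀ n : ℕ,
        (∀ k < n, u ((S19.ss hsw i - S19.ss hsw j) + k) = w (S19.ss hsw i + k)) →
        u ((S19.ss hsw i - S19.ss hsw j) + n) ≤ w (S19.ss hsw i + n)) ∧
      (∀ j : ℕ, j < i → S19.ll hsw i ≤ S19.fd hu (S19.ss hsw i - S19.ss hsw j)) := by
    intro i
    induction i using Nat.strong_induction_on with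
    | _ i IH =>
      have CHi : ∀ j : ℕ, j ≤ i → ∀ n : ℕ,
          (∀ k < n, u ((S19.ss hsw i - S19.ss hsw j) + k) = w (S19.ss hsw i + k)) →
          u ((S19.ss hsw i - S19.ss hsw j) + n) ≤ w (S19.ss hsw i + n) := by
        intro j hj
        rcases eq_or_lt_of_le hj with hje | hjlt
        · -- fresh constraint, j = i
          subst hje
          have hsf := S19.sqf_shift hsq (S19.ss hsw j)
          have hle := hL (fun n => w (S19.ss hsw j + n)) hsf
          intro n hn
          have e0 : S19.ss hsw j - S19.ss hsw j = 0 := by omega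
          rw [e0, Nat.zero_add]
          have := hle n (fun k hk => by
            have h := hn k hk
            rw [e0, Nat.zero_add] at h
            exact h)
          exact this
        · -- propagated constraint, j < i
          obtain ⟨i', rfl⟩ : ∃ i', i = i' + 1 := ⟨i - 1, by omega⟩
          have hji' : j ≤ i' := by omega
          have CHprev := (IH i' (by omega)).1 j hji'
          have KILLi' := (IH i' (by omega)).2
          have hssle : S19.ss hsw j ≤ S19.ss hsw i' := by
            rcases eq_or_lt_of_le hji' with he | hlt2
            · rw [he]
            · exact (S19.ss_mono hsw hlt2).le
          have hpre : ∀ m, m < S19.ll hsw i' → u (S19.cc hsw i' + m) = u m := by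
            intro m hm
            refine pre i' (S19.ll hsw i')
              (fun m' j'' h1 h2 => (IH m' (by omega)).2 j'' h1) ?_ m hm
            intro h2
            have hk := KILLi' (i' - 1) (by omega)
            have e0 : i' - 1 + 1 = i' := by omega
            have ea := S19.ss_add hsw (i' - 1)
            rw [e0] at ea
            have e1 : S19.ss hsw i' - S19.ss hsw (i' - 1) = S19.ll hsw (i' - 1) := by omega
            rw [e1] at hk
            have := S19.fd_lt_self hu (S19.ll_pos hsw (i' - 1))
            omega
          have hblock : ∀ m, m < S19.ll hsw i' →
              u ((S19.ss hsw i' - S19.ss hsw j) + m) = w (S19.ss hsw i' + m) := by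
            intro m hm
            have hrl : w (S19.ss hsw i' + m) = u (S19.cc hsw i' + m) := S19.run_letter hsw hm
            rw [hrl, hpre m hm]
            rcases eq_or_lt_of_le hji' with he | hlt2
            · rw [he]
              have e0 : S19.ss hsw i' - S19.ss hsw i' = 0 := by omega
              rw [e0, Nat.zero_add]
            · have hk := KILLi' j hlt2
              have hpos : 0 < S19.ss hsw i' - S19.ss hsw j := by
                have := S19.ss_mono hsw hlt2; omega
              exact (S19.fd_agree hu hpos (lt_of_lt_of_le hm hk)).symm
          intro n hn
          have e1 := S19.ss_add hsw i'
          have eqidx : S19.ss hsw (i' + 1) - S19.ss hsw j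
              = (S19.ss hsw i' - S19.ss hsw j) + S19.ll hsw i' := by omega
          have happ := CHprev (S19.ll hsw i' + n) (fun k hk => by
            rcases Nat.lt_or_ge k (S19.ll hsw i') with hk1 | hk1
            · exact hblock k hk1
            · obtain ⟨k', rfl⟩ : ∃ k', k = S19.ll hsw i' + k' :=
                ⟨k - S19.ll hsw i', by omega⟩
              have h := hn k' (by omega)
              have e2 : (S19.ss hsw i' - S19.ss hsw j) + (S19.ll hsw i' + k')
                  = (S19.ss hsw (i' + 1) - S19.ss hsw j) + k' := by omega
              have e3 : S19.ss hsw i' + (S19.ll hsw i' + k') = S19.ss hsw (i' + 1) + k' := by omega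
              rw [e2, e3]
              exact h)
          have e4 : (S19.ss hsw i' - S19.ss hsw j) + (S19.ll hsw i' + n)
              = (S19.ss hsw (i' + 1) - S19.ss hsw j) + n := by omega
          have e5 : S19.ss hsw i' + (S19.ll hsw i' + n) = S19.ss hsw (i' + 1) + n := by omega
          rw [e4, e5] at happ
          exact happ
      refine ⟨CHi, ?_⟩
      intro j hj
      obtain ⟨i', rfl⟩ : ∃ i', i = i' + 1 := ⟨i - 1, by omega⟩
      by_contra hcon
      push_neg at hcon
      have hmono := S19.ss_mono hsw hj
      set q := S19.ss hsw (i' + 1) - S19.ss hsw j with hq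
      have hqpos : 0 < q := by omega
      have hfq : 2 ≤ i' + 1 → S19.fd hu q + 1 ≤ S19.ll hsw (i' + 1 - 1) := by
        intro h2
        have e0 : i' + 1 - 1 = i' := by omega
        rw [e0]
        have hfd2 : S19.fd hu q ≤ S19.fd hu (S19.ll hsw i') := by
          rcases eq_or_lt_of_le (show j ≤ i' by omega) with he | hlt2
          · have e : q = S19.ll hsw i' := by
              rw [hq, ← he]
              have := S19.ss_add hsw j
              rw [he] at this ⊢
              omega
            rw [e]
          · have hmono2 := S19.ss_mono hsw hlt2
            have ha : 0 < S19.ss hsw i' - S19.ss hsw j := by omega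
            have hv := (IH i' (by omega)).2 j hlt2
            have e : (S19.ss hsw i' - S19.ss hsw j) + S19.ll hsw i' = q := by
              have := S19.ss_add hsw i'
              omega
            calc S19.fd hu q
                = S19.fd hu ((S19.ss hsw i' - S19.ss hsw j) + S19.ll hsw i') := by rw [e]
              _ ≤ S19.fd hu (S19.ll hsw i') :=
                  S19.fd_add_le_left hL hu ha (S19.ll_pos hsw i') hv
        have := S19.fd_lt_self hu (S19.ll_pos hsw i')
        omega
      have hpre2 : ∀ m, m < S19.fd hu q + 1 → u (S19.cc hsw (i' + 1) + m) = u m := by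
        intro m hm
        exact pre (i' + 1) (S19.fd hu q + 1)
          (fun m' j'' h1 h2 => (IH m' (by omega)).2 j'' h1) hfq m hm
      have hagr : ∀ k, k < S19.fd hu q → u (q + k) = w (S19.ss hsw (i' + 1) + k) := by
        intro k hk
        have h1 : u (q + k) = u k := (S19.fd_agree hu hqpos hk).symm
        have h2 : u k = u (S19.cc hsw (i' + 1) + k) := (hpre2 k (by omega)).symm
        have h3 : w (S19.ss hsw (i' + 1) + k) = u (S19.cc hsw (i' + 1) + k) :=
          S19.run_letter hsw (lt_trans hk hcon)
        rw [h1, h2, ← h3]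
      have hch := CHi j (by omega) (S19.fd hu q) (fun k hk => hagr k hk)
      have h4 : w (S19.ss hsw (i' + 1) + S19.fd hu q) = u (S19.cc hsw (i' + 1) + S19.fd hu q) :=
        S19.run_letter hsw hcon
      have h5 : u (S19.cc hsw (i' + 1) + S19.fd hu q) = u (S19.fd hu q) :=
        hpre2 _ (by omega)
      rw [h4, h5] at hch
      have h6 := S19.fd_up hL hu hqpos
      exact absurd hch (not_le.mpr h6)
  -- final contradiction
  have HK : ∀ m j : ℕ, j < m → S19.ll hsw m ≤ S19.fd hu (S19.ss hsw m - S19.ss hsw j) :=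
    fun m j h => (main m).2 j h
  have hgrow : ∀ i : ℕ, S19.ss hsw 1 + i ≤ S19.ss hsw (i + 1) := by
    intro i
    induction i with
    | zero => simp
    | succ i ih =>
      have := S19.ss_lt hsw (i + 1)
      omega
  have hbound : ∀ i : ℕ, 1 ≤ i →
      S19.ss hsw (i + 1) - S19.ss hsw 1 ≤ S19.fd hu (S19.ss hsw 1 - S19.ss hsw 0) := by
    intro i hi
    exact stq i (fun m j h1 h2 => HK m j h1) 1 0 (by omega) hi
  set Fv := S19.fd hu (S19.ss hsw 1 - S19.ss hsw 0) with hFv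
  have hb := hbound (Fv + 1) (by omega)
  have hg := hgrow (Fv + 1)
  omega
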